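/- arXiv:1902.09570 — 3 statements merged into one kernel-verified Lean document; each statement's English description precedes it below -/
import Mathlib

section
/- There is no finitely supported surjection from the set A of atoms onto ℘_fin(A), the set of finite subsets of A with the elementwise action of finitary permutations. -/
open Pointwise

/-- The group of finitary permutations of the set `A` of atoms: bijections of `A`
whose set of non-fixed points is finite. -/
def FinPerm (A : Type*) : Subgroup (Equiv.Perm A) where
  carrier := {π : Equiv.Perm A | {a : A | π a ≠ a}.Finite}
  one_mem' := by simp
  mul_mem' := by
    intro π σ hπ hσ
    refine Set.Finite.subset (Set.Finite.union hπ hσ) ?_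
    intro a ha
    simp only [Set.mem_setOf_eq, Set.mem_union] at *
    by_contra h
    push_neg at h
    obtain ⟨h1, h2⟩ := h
    exact ha (by rw [Equiv.Perm.mul_apply, h2, h1])
  inv_mem' := by
    intro π hπ
    refine Set.Finite.subset hπ ?_
    intro a ha
    simp only [Set.mem_setOf_eq] at *
    intro h
    exact ha (π.injective (by rw [h]; exact π.apply_symm_apply a))

/-- An element `x` is finitely supported if some finite set of atoms supports it. -/
def FinSupp (A : Type*) {X : Type*} [SMul (FinPerm A) X] (x : X) : Prop :=
  ∃ S : Finset A, MulAction.Supports (FinPerm A) (S : Set A) x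

/-- The least support of an element: the intersection of all finite sets of atoms
supporting it. -/
def supp (A : Type*) {X : Type*} [SMul (FinPerm A) X] (x : X) : Set A :=
  ⋂₀ {S : Set A | S.Finite ∧ MulAction.Supports (FinPerm A) S x}

/-- A set `S` of atoms supports a function `f` if `f (π • x) = π • f x` for every
finitary permutation `π` fixing `S` pointwise. -/
def SuppFun (A : Type*) {X Y : Type*} [SMul (FinPerm A) X] [SMul (FinPerm A) Y]
    (S : Set A) (f : X → Y) : Prop :=
  ∀ π : FinPerm A, (∀ a ∈ S, π • a = a) → ∀ x, f (π • x) = π • f x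

/-- A set `S` of atoms supports a function `f` between the subsets `X` and `Y` if, for
every finitary permutation `π` fixing `S` pointwise and every `x ∈ X`, we have
`π • x ∈ X`, `π • f x ∈ Y` and `f (π • x) = π • f x`. -/
def SuppFunOn (A : Type*) {U V : Type*} [SMul (FinPerm A) U] [SMul (FinPerm A) V]
    (S : Set A) (X : Set U) (Y : Set V) (f : U → V) : Prop :=
  ∀ π : FinPerm A, (∀ a ∈ S, π • a = a) →
    ∀ x ∈ X, π • x ∈ X ∧ π • f x ∈ Y ∧ f (π • x) = π • f x

/-- `℘_fs(X)`: the finitely supported subsets of the set `X`. -/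
def Pfs (A : Type*) {U : Type*} [SMul (FinPerm A) U] (X : Set U) : Set (Set U) :=
  {Z : Set U | Z ⊆ X ∧ FinSupp A Z}


/-- there is no finitely supported surjection from the set `A` of atoms
onto `℘_fin(A)`, the set of finite subsets of `A` with the elementwise action. -/
theorem no_finSupp_surjection_atoms_to_finiteSubsets {A : Type*} [Infinite A] :
    ¬ ∃ (g : A → Set A) (S : Finset A),
      (∀ a : A, (g a).Finite) ∧
      (∀ Y : Set A, Y.Finite → ∃ a : A, g a = Y) ∧
      (∀ π : FinPerm A, (∀ b ∈ (S : Set A), π • b = b) → ∀ a : A, g (π • a) = π • g a) := by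
  rintro ⟨g, S, hfin, hsurj, hsupp⟩
  classical
  have key : ∀ a : A, g a ⊆ insert a (S : Set A) := by
    intro a b hb
    by_contra hb'
    simp only [Set.mem_insert_iff, not_or] at hb'
    obtain ⟨hba, hbS⟩ := hb'
    obtain ⟨c, hc⟩ := (S ∪ (hfin a).toFinset ∪ {a}).exists_notMem
    simp only [Finset.mem_union, Finset.mem_singleton, Set.Finite.mem_toFinset, not_or] at hc
    obtain ⟨⟨hcS, hcg⟩, hca⟩ := hc
    set π : Equiv.Perm A := Equiv.swap b c with hπdef
    have hπ : π ∈ FinPerm A := by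
      refine Set.Finite.subset ((Set.finite_singleton c).insert b) ?_
      intro x hx
      simp only [Set.mem_setOf_eq] at hx
      by_contra h
      simp only [Set.mem_insert_iff, Set.mem_singleton_iff, not_or] at h
      exact hx (Equiv.swap_apply_of_ne_of_ne h.1 h.2)
    have hfix : ∀ x ∈ (S : Set A), (⟨π, hπ⟩ : FinPerm A) • x = x := by
      intro x hxS
      show π x = x
      apply Equiv.swap_apply_of_ne_of_ne
      · rintro rfl; exact hbS hxS
      · rintro rfl; exact hcS hxS
    have h1 := hsupp ⟨π, hπ⟩ hfix a
    have ha : (⟨π, hπ⟩ : FinPerm A) • a = a := by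
      show π a = a
      exact Equiv.swap_apply_of_ne_of_ne (Ne.symm hba) (fun h => hca h.symm)
    rw [ha] at h1
    have hc' : c ∈ (⟨π, hπ⟩ : FinPerm A) • g a := by
      refine Set.mem_smul_set.mpr ⟨b, hb, ?_⟩
      show π b = c
      exact Equiv.swap_apply_left b c
    rw [← h1] at hc'
    exact hcg hc'
  obtain ⟨T, -, hT⟩ := Infinite.exists_superset_card_eq S (S.card + 2) (by omega)
  obtain ⟨a, hga⟩ := hsurj (T : Set A) (T.finite_toSet)
  have hsub : (T : Set A) ⊆ ((insert a S : Finset A) : Set A) := by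
    rw [← hga]
    simpa using key a
  have := Finset.card_le_card (Finset.coe_subset.mp hsub)
  have := Finset.card_insert_le a S
  omega
end

section
/- Let f : A → A be a function supported by a finite set S ⊆ A, i.e., f(π a) = π (f a) for every a ∈ A and every finitary permutation π fixing S pointwise. Then either f(a) = a for all a ∈ A ∖ S, or there exists x₀ ∈ S such that f(a) = x₀ for all a ∈ A ∖ S. -/
open Pointwise

lemma swap_mem_finPerm {A : Type*} [DecidableEq A] (a b : A) :
    Equiv.swap a b ∈ FinPerm A := by
  refine Set.Finite.subset ((Set.finite_singleton b).insert a) ?_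
  intro x hx
  simp only [Set.mem_setOf_eq] at hx
  by_contra h
  simp only [Set.mem_insert_iff, Set.mem_singleton_iff] at h
  push_neg at h
  exact hx (Equiv.swap_apply_of_ne_of_ne h.1 h.2)

/-- if `f : A → A` is supported by the finite set `S` of atoms (i.e.
`f (π a) = π (f a)` for every `a` and every finitary permutation `π` fixing `S`
pointwise), then either `f` is the identity on `A ∖ S`, or there is `x₀ ∈ S` such that
`f` is constantly `x₀` on `A ∖ S`. -/
theorem supported_selfMap_id_or_const_off_support {A : Type*} [Infinite A]
    (f : A → A) (S : Finset A)
    (hf : ∀ π : FinPerm A, (∀ a ∈ (S : Set A), π • a = a) → ∀ a : A, f (π • a) = π • f a) :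
    (∀ a ∉ S, f a = a) ∨ (∃ x₀ ∈ S, ∀ a ∉ S, f a = x₀) := by
  classical
  -- smul on A is just application
  have hsmul : ∀ (π : FinPerm A) (a : A), π • a = (π : Equiv.Perm A) a := fun _ _ => rfl
  -- step 1: for a ∉ S, f a = a or f a ∈ S
  have key : ∀ a ∉ S, f a = a ∨ f a ∈ S := by
    intro a ha
    by_contra h
    push_neg at h
    obtain ⟨h1, h2⟩ := h
    obtain ⟨c, hc⟩ := (S ∪ {a, f a} : Finset A).exists_notMem
    simp only [Finset.mem_union, Finset.mem_insert, Finset.mem_singleton] at hc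
    push_neg at hc
    set π : FinPerm A := ⟨Equiv.swap (f a) c, swap_mem_finPerm _ _⟩ with hπ
    have hfix : ∀ x ∈ (S : Set A), π • x = x := by
      intro x hx
      rw [hsmul]
      exact Equiv.swap_apply_of_ne_of_ne (fun e => h2 (Finset.mem_coe.mp (e ▸ hx))) (fun e => hc.1 (Finset.mem_coe.mp (e ▸ hx)))
    have := hf π hfix a
    rw [hsmul, hsmul] at this
    simp only [hπ] at this
    rw [Equiv.swap_apply_of_ne_of_ne (fun e => h1 e.symm) (fun e => hc.2.1 e.symm),
      Equiv.swap_apply_left] at this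
    exact hc.2.2 this.symm
  by_cases hid : ∀ a ∉ S, f a = a
  · exact Or.inl hid
  · push_neg at hid
    obtain ⟨a₀, ha₀, hfa₀⟩ := hid
    have hx₀ : f a₀ ∈ S := (key a₀ ha₀).resolve_left hfa₀
    refine Or.inr ⟨f a₀, hx₀, fun a ha => ?_⟩
    by_cases hea : a = a₀
    · rw [hea]
    set π : FinPerm A := ⟨Equiv.swap a a₀, swap_mem_finPerm _ _⟩ with hπ
    have hfix : ∀ x ∈ (S : Set A), π • x = x := by
      intro x hx
      rw [hsmul]
      exact Equiv.swap_apply_of_ne_of_ne (fun e => ha (Finset.mem_coe.mp (e ▸ hx))) (fun e => ha₀ (Finset.mem_coe.mp (e ▸ hx)))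
    have := hf π hfix a₀
    rw [hsmul, hsmul] at this
    simp only [hπ] at this
    rw [Equiv.swap_apply_right,
      Equiv.swap_apply_of_ne_of_ne (fun e => ha (by rw [← e]; exact hx₀)) (fun e => ha₀ (by rw [← e]; exact hx₀))] at this
    exact this
end

section
/- Let X and Y be finitely supported subsets of an invariant set under finitary permutations of A. If neither X nor Y is FSM Dedekind infinite (i.e., neither admits a finitely supported injection from ℕ with the trivial action), then the Cartesian product X × Y with the componentwise action is not FSM Dedekind infinite. -/
open Pointwise

/-- A finitely supported set is FSM Dedekind infinite iff it admits a finitely supported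
injection from `ℕ` (with the trivial action). -/
def FSMDedekindInfinite (A : Type*) {W : Type*} [SMul (FinPerm A) W] (X : Set W) : Prop :=
  ∃ f : ℕ → W, Function.Injective f ∧ (∀ n, f n ∈ X) ∧
    ∃ S : Finset A, ∀ π : FinPerm A, (∀ a ∈ (S : Set A), π • a = a) →
      ∀ n : ℕ, π • f n = f n

/-- if `X` and `Y` are finitely supported subsets of an invariant set and
neither is FSM Dedekind infinite, then the Cartesian product `X × Y` (with the
componentwise action) is not FSM Dedekind infinite. -/
theorem fsm_dedekind_infinite_prod {A U : Type*} [Infinite A]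
    [MulAction (FinPerm A) U] (hU : ∀ u : U, FinSupp A u)
    (X Y : Set U) (hX : FinSupp A X) (hY : FinSupp A Y)
    (hXD : ¬ FSMDedekindInfinite A X) (hYD : ¬ FSMDedekindInfinite A Y) :
    ¬ FSMDedekindInfinite A (X ×ˢ Y) := by
  rintro ⟨f, hinj, hmem, S, hsupp⟩
  -- the two projections
  set g : ℕ → U := fun n => (f n).1 with hg
  set h : ℕ → U := fun n => (f n).2 with hh
  have hgX : ∀ n, g n ∈ X := fun n => (hmem n).1
  have hhY : ∀ n, h n ∈ Y := fun n => (hmem n).2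
  have hgfix : ∀ π : FinPerm A, (∀ a ∈ (S : Set A), π • a = a) → ∀ n, π • g n = g n := by
    intro π hπ n
    have := congrArg Prod.fst (hsupp π hπ n)
    simpa using this
  have hhfix : ∀ π : FinPerm A, (∀ a ∈ (S : Set A), π • a = a) → ∀ n, π • h n = h n := by
    intro π hπ n
    have := congrArg Prod.snd (hsupp π hπ n)
    simpa using this
  -- one of the ranges must be infinite
  have hor : (Set.range g).Infinite ∨ (Set.range h).Infinite := by
    by_contra hc
    push_neg at hc
    have hfin : (Set.range f).Finite := by
      refine Set.Finite.subset (hc.1.prod hc.2) ?_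
      rintro p ⟨n, rfl⟩
      exact ⟨⟨n, rfl⟩, ⟨n, rfl⟩⟩
    exact (Set.infinite_range_of_injective hinj) hfin
  rcases hor with hinf | hinf
  · refine hXD ?_
    let e := hinf.natEmbedding
    refine ⟨fun n => (e n : U), ?_, ?_, S, ?_⟩
    · intro m n hmn
      exact e.injective (Subtype.ext hmn)
    · intro n
      obtain ⟨m, hm⟩ := (e n).2
      show (e n : U) ∈ X
      rw [← hm]; exact hgX m
    · intro π hπ n
      obtain ⟨m, hm⟩ := (e n).2
      show π • (e n : U) = (e n : U)
      rw [← hm]; exact hgfix π hπ m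
  · refine hYD ?_
    let e := hinf.natEmbedding
    refine ⟨fun n => (e n : U), ?_, ?_, S, ?_⟩
    · intro m n hmn
      exact e.injective (Subtype.ext hmn)
    · intro n
      obtain ⟨m, hm⟩ := (e n).2
      show (e n : U) ∈ Y
      rw [← hm]; exact hhY m
    · intro π hπ n
      obtain ⟨m, hm⟩ := (e n).2
      show π • (e n : U) = (e n : U)
      rw [← hm]; exact hhfix π hπ m
end
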